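/- Let G be a properly colored K_{2,r}-free undirected graph (r ≥ 2) with χ(G) ≥ (r-1)(s-1)s/2 + s. Then G contains an induced rainbow path on s vertices. -/

import Mathlib

/-- `G` contains no subgraph isomorphic to the complete bipartite graph `K_{2,r}`. -/
def K2rFree {V : Type*} (G : SimpleGraph V) (r : ℕ) : Prop :=
  ¬ ∃ (u x : V) (w : Fin r → V), Function.Injective w ∧ u ≠ x ∧
      (∀ i, w i ≠ u ∧ w i ≠ x) ∧ ∀ i, G.Adj u (w i) ∧ G.Adj x (w i)

open Finset

/-- An induced path with strictly increasing colors. -/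
def GoodPath {V : Type*} (G : SimpleGraph V) (c : V → ℕ) (m : ℕ) (g : Fin (m+1) → V) : Prop :=
  (∀ i j, G.Adj (g i) (g j) ↔ (i.val + 1 = j.val ∨ j.val + 1 = i.val)) ∧
  (∀ i j, i < j → c (g i) < c (g j))

lemma goodPath_singleton {V : Type*} (G : SimpleGraph V) (c : V → ℕ) (v : V) :
    GoodPath G c 0 (fun _ => v) := by
  constructor
  · intro i j
    have hi : i = 0 := Fin.ext (by omega)
    have hj : j = 0 := Fin.ext (by omega)
    subst hi; subst hj
    simp [SimpleGraph.irrefl]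
  · intro i j hij
    exact absurd hij (by simp [Fin.lt_def])

lemma goodPath_cinj {V : Type*} {G : SimpleGraph V} {c : V → ℕ} {m : ℕ} {g : Fin (m+1) → V}
    (hg : GoodPath G c m g) : Function.Injective (c ∘ g) := by
  intro a b hab
  rcases lt_trichotomy a b with h | h | h
  · exact absurd hab (Nat.ne_of_lt (hg.2 a b h))
  · exact h
  · exact absurd hab.symm (Nat.ne_of_lt (hg.2 b a h))

lemma goodPath_inj {V : Type*} {G : SimpleGraph V} {c : V → ℕ} {m : ℕ} {g : Fin (m+1) → V}
    (hg : GoodPath G c m g) : Function.Injective g :=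
  fun a b h => goodPath_cinj hg (congrArg c h)

lemma goodPath_snoc {V : Type*} {G : SimpleGraph V} {c : V → ℕ} {m : ℕ} {g : Fin (m+1) → V}
    (hg : GoodPath G c m g) {v : V} (hadj : G.Adj (g (Fin.last m)) v)
    (hcv : c (g (Fin.last m)) < c v)
    (hni : ∀ i : Fin (m+1), i ≠ Fin.last m → ¬ G.Adj (g i) v) :
    GoodPath G c (m+1) (Fin.snoc g v) := by
  have hmono : ∀ i : Fin (m+1), c (g i) ≤ c (g (Fin.last m)) := by
    intro i
    rcases eq_or_lt_of_le (Fin.le_last i) with h | h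
    · rw [show i = Fin.last m from h]
    · exact le_of_lt (hg.2 i (Fin.last m) h)
  constructor
  · intro i j
    rcases Fin.eq_castSucc_or_eq_last i with ⟨i0, rfl⟩ | rfl <;>
      rcases Fin.eq_castSucc_or_eq_last j with ⟨j0, rfl⟩ | rfl
    · simpa [Fin.snoc_castSucc] using hg.1 i0 j0
    · rw [Fin.snoc_castSucc, Fin.snoc_last]
      have hile : i0.val ≤ m := Fin.is_le i0
      constructor
      · intro hA
        by_cases hi : i0 = Fin.last m
        · subst hi; left; simp
        · exact absurd hA (hni i0 hi)
      · intro hOr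
        have : i0.val + 1 = m + 1 := by
          rcases hOr with h | h
          · simpa using h
          · simp at h; omega
        have : i0 = Fin.last m := Fin.ext (by simpa using Nat.succ_injective this)
        subst this; exact hadj
    · rw [Fin.snoc_castSucc, Fin.snoc_last, G.adj_comm]
      have hile : j0.val ≤ m := Fin.is_le j0
      constructor
      · intro hA
        by_cases hj : j0 = Fin.last m
        · subst hj; right; simp
        · exact absurd hA (hni j0 hj)
      · intro hOr
        have : j0.val + 1 = m + 1 := by
          rcases hOr with h | h
          · simp at h; omega
          · simpa using h
        have : j0 = Fin.last m := Fin.ext (by simpa using Nat.succ_injective this)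
        subst this; exact hadj
    · rw [Fin.snoc_last]
      simp [SimpleGraph.irrefl]
  · intro i j hij
    rcases Fin.eq_castSucc_or_eq_last j with ⟨j0, rfl⟩ | rfl
    · rcases Fin.eq_castSucc_or_eq_last i with ⟨i0, rfl⟩ | rfl
      · rw [Fin.snoc_castSucc, Fin.snoc_castSucc]
        exact hg.2 i0 j0 (by simpa using hij)
      · exact absurd hij (by
          have := Fin.is_le j0
          simp only [Fin.lt_def, Fin.val_last, Fin.coe_castSucc, not_lt]
          omega)
    · rcases Fin.eq_castSucc_or_eq_last i with ⟨i0, rfl⟩ | rfl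
      · rw [Fin.snoc_castSucc, Fin.snoc_last]
        exact lt_of_le_of_lt (hmono i0) hcv
      · exact absurd hij (lt_irrefl _)



lemma common_nbrs_le {V : Type*} [Fintype V] {G : SimpleGraph V} [DecidableRel G.Adj] {r : ℕ}
    (hfree : K2rFree G r) {a b : V} (hab : a ≠ b) :
    (Finset.univ.filter (fun w => G.Adj a w ∧ G.Adj b w)).card ≤ r - 1 := by
  classical
  by_contra h
  push_neg at h
  have hr : r ≤ (Finset.univ.filter (fun w => G.Adj a w ∧ G.Adj b w)).card := by omega
  obtain ⟨T, hTsub, hTcard⟩ := Finset.exists_subset_card_eq hr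
  have e : Fin r ≃ T := (Finset.equivFinOfCardEq hTcard).symm
  have hmem : ∀ i : Fin r, G.Adj a ((e i : T) : V) ∧ G.Adj b ((e i : T) : V) := by
    intro i
    have := hTsub (e i).2
    simpa using this
  exact hfree ⟨a, b, fun i => ((e i : T) : V),
    fun i j hij => e.injective (Subtype.ext hij), hab,
    fun i => ⟨(hmem i).1.ne', (hmem i).2.ne'⟩,
    fun i => hmem i⟩

lemma greedy_coloring {V : Type*} [Fintype V] [DecidableEq V] (G : SimpleGraph V) [DecidableRel G.Adj] (c : V → ℕ)
    (hc : ∀ u v, G.Adj u v → c u ≠ c v) (D : ℕ) :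
    ∀ (n : ℕ) (S : Finset V), S.card = n →
      (∀ v ∈ S, (S.filter (fun w => G.Adj v w ∧ c v < c w)).card ≤ D) →
      ∃ σ : V → ℕ, (∀ v ∈ S, σ v ≤ D) ∧
        ∀ u ∈ S, ∀ w ∈ S, G.Adj u w → σ u ≠ σ w := by
  classical
  intro n
  induction n using Nat.strong_induction_on with
  | _ n ih =>
    intro S hcard hS
    rcases Finset.eq_empty_or_nonempty S with rfl | hne
    · exact ⟨fun _ => 0, by simp, by simp⟩
    obtain ⟨v, hv, hmin⟩ := S.exists_min_image c hne
    set S' := S.erase v with hS'def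
    have hadjlt : ∀ w ∈ S', G.Adj v w → c v < c w := by
      intro w hw hvw
      have hwS : w ∈ S := Finset.mem_of_mem_erase hw
      exact lt_of_le_of_ne (hmin w hwS) (hc v w hvw)
    have hcard' : S'.card < n := by
      rw [← hcard]
      exact Finset.card_erase_lt_of_mem hv
    have hS'hyp : ∀ u ∈ S', (S'.filter (fun w => G.Adj u w ∧ c u < c w)).card ≤ D := by
      intro u hu
      refine le_trans (Finset.card_le_card ?_) (hS u (Finset.mem_of_mem_erase hu))
      exact Finset.filter_subset_filter _ (Finset.erase_subset _ _)
    obtain ⟨σ, hσle, hσprop⟩ := ih S'.card hcard' S' rfl hS'hyp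
    set B := (S'.filter (fun w => G.Adj v w)).image σ with hBdef
    have hBcard : B.card ≤ D := by
      refine le_trans (Finset.card_image_le) (le_trans (Finset.card_le_card ?_) (hS v hv))
      intro w hw
      rw [Finset.mem_filter] at hw ⊢
      exact ⟨Finset.mem_of_mem_erase hw.1, hw.2, hadjlt w hw.1 hw.2⟩
    have hex : ∃ a ∈ Finset.range (D+1), a ∉ B := by
      by_contra hall
      push_neg at hall
      have : Finset.range (D+1) ⊆ B := fun a ha => hall a ha
      have := Finset.card_le_card this
      simp at this
      omega
    obtain ⟨a, ha, haB⟩ := hex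
    have haD : a ≤ D := by
      have := Finset.mem_range.mp ha; omega
    refine ⟨Function.update σ v a, ?_, ?_⟩
    · intro u hu
      by_cases huv : u = v
      · subst huv; simp [haD]
      · rw [Function.update_of_ne huv]
        exact hσle u (Finset.mem_erase.mpr ⟨huv, hu⟩)
    · intro u hu w hw huw
      by_cases huv : u = v <;> by_cases hwv : w = v
      · subst huv; subst hwv; exact absurd huw (G.irrefl)
      · subst huv
        rw [Function.update_self, Function.update_of_ne hwv]
        intro hEq
        exact haB (hEq ▸ Finset.mem_image_of_mem σ
          (Finset.mem_filter.mpr ⟨Finset.mem_erase.mpr ⟨hwv, hw⟩, huw⟩))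
      · subst hwv
        rw [Function.update_self, Function.update_of_ne huv]
        intro hEq
        exact haB (hEq ▸ Finset.mem_image_of_mem σ
          (Finset.mem_filter.mpr ⟨Finset.mem_erase.mpr ⟨huv, hu⟩, huw.symm⟩))
      · rw [Function.update_of_ne huv, Function.update_of_ne hwv]
        exact hσprop u (Finset.mem_erase.mpr ⟨huv, hu⟩) w (Finset.mem_erase.mpr ⟨hwv, hw⟩) huw

/-- Every properly colored `K_{2,r}`-free graph (`r ≥ 2`) with
`χ(G) ≥ (r-1)(s-1)s/2 + s` contains an induced rainbow path on `s` vertices. -/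
theorem stmt15 {V : Type*} [Fintype V] (G : SimpleGraph V) (r s : ℕ) (hr : 2 ≤ r)
    (hfree : K2rFree G r)
    (hchi : (((r - 1) * (s - 1) * s / 2 + s : ℕ) : ℕ∞) ≤ G.chromaticNumber)
    (c : V → ℕ) (hc : ∀ u v, G.Adj u v → c u ≠ c v) :
    ∃ f : Fin s → V, Function.Injective f ∧
      (∀ i j : Fin s, G.Adj (f i) (f j) ↔ (i.val + 1 = j.val ∨ j.val + 1 = i.val)) ∧
      Function.Injective (c ∘ f) := by
  classical
  rcases Nat.lt_or_ge s 2 with hs | hs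
  · -- trivial cases s = 0, 1
    interval_cases s
    · exact ⟨fun i => i.elim0, fun i => i.elim0, fun i => i.elim0, fun i => i.elim0⟩
    · have hne : Nonempty V := by
        by_contra hempty
        have hE : IsEmpty V := not_nonempty_iff.mp hempty
        have hcol : G.Colorable 0 := ⟨⟨fun v => isEmptyElim v, fun {a} => isEmptyElim a⟩⟩
        have h0 := hcol.chromaticNumber_le
        have h1 : ((1 : ℕ) : ℕ∞) ≤ G.chromaticNumber := by simpa using hchi
        have : ((1 : ℕ) : ℕ∞) ≤ (0 : ℕ) := le_trans h1 h0
        simp at this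
      obtain ⟨v⟩ := hne
      refine ⟨fun _ => v, ?_, ?_, ?_⟩
      · intro a b _; exact Fin.ext (by omega)
      · intro i j
        have hi : i.val = 0 := by omega
        have hj : j.val = 0 := by omega
        simp [hi, hj, SimpleGraph.irrefl]
      · intro a b _; exact Fin.ext (by omega)
  -- main case: s ≥ 2
  by_contra hcon
  set Ppath : ℕ → V → Prop :=
    fun m v => ∃ g : Fin (m+1) → V, GoodPath G c m g ∧ g (Fin.last m) = v with hPdef
  set ψ : V → ℕ := fun v => Nat.findGreatest (fun m => Ppath m v) s with hψdef
  have hP0 : ∀ v, Ppath 0 v := fun v => ⟨fun _ => v, goodPath_singleton G c v, rfl⟩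
  have hψspec : ∀ v, Ppath (ψ v) v := fun v => Nat.findGreatest_spec (P := fun m => Ppath m v) (Nat.zero_le s) (hP0 v)
  have hψub : ∀ m v, m ≤ s → Ppath m v → m ≤ ψ v := fun m v h hp => Nat.le_findGreatest (P := fun m => Ppath m v) h hp
  have hψle : ∀ v, ψ v ≤ s - 2 := by
    intro v
    by_contra hgt
    push_neg at hgt
    obtain ⟨g, hg, hgv⟩ := hψspec v
    have hsle : s ≤ ψ v + 1 := by omega
    have hcinj : Function.Injective (c ∘ fun i : Fin s => g (Fin.castLE hsle i)) := by
      intro a b hab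
      exact Fin.castLE_injective hsle (goodPath_cinj hg hab)
    refine hcon ⟨fun i => g (Fin.castLE hsle i), fun a b h => hcinj (congrArg c h), ?_, hcinj⟩
    intro i j
    rw [hg.1]
    simp
  have houtdeg : ∀ v : V,
      (univ.filter (fun w => G.Adj v w ∧ ψ w = ψ v ∧ c v < c w)).card ≤ (r-1) * ψ v := by
    intro v
    obtain ⟨g, hg, hgv⟩ := hψspec v
    have hsub : univ.filter (fun w => G.Adj v w ∧ ψ w = ψ v ∧ c v < c w) ⊆
        (univ.filter (fun i : Fin (ψ v + 1) => i ≠ Fin.last (ψ v))).biUnion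
          (fun i => univ.filter (fun w => G.Adj (g i) w ∧ G.Adj v w)) := by
      intro w hw
      rw [Finset.mem_filter] at hw
      obtain ⟨-, hvw, hψw, hcw⟩ := hw
      by_contra hnmem
      have hni : ∀ i : Fin (ψ v + 1), i ≠ Fin.last (ψ v) → ¬ G.Adj (g i) w := by
        intro i hi hadj
        exact hnmem (Finset.mem_biUnion.mpr ⟨i, by simp [hi], by simp [hadj, hvw]⟩)
      have hsnoc := goodPath_snoc hg (by rw [hgv]; exact hvw) (by rw [hgv]; exact hcw) hni
      have hPw : Ppath (ψ v + 1) w := ⟨Fin.snoc g w, hsnoc, Fin.snoc_last _ _⟩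
      have := hψub (ψ v + 1) w (by have := hψle v; omega) hPw
      omega
    refine le_trans (Finset.card_le_card hsub) (le_trans Finset.card_biUnion_le ?_)
    have hbound : ∀ i ∈ univ.filter (fun i : Fin (ψ v + 1) => i ≠ Fin.last (ψ v)),
        (univ.filter (fun w => G.Adj (g i) w ∧ G.Adj v w)).card ≤ r - 1 := by
      intro i hi
      rw [Finset.mem_filter] at hi
      refine common_nbrs_le hfree ?_
      intro hEq
      exact hi.2 (goodPath_inj hg (hEq.trans hgv.symm))
    calc ∑ i ∈ univ.filter (fun i : Fin (ψ v + 1) => i ≠ Fin.last (ψ v)),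
          (univ.filter (fun w => G.Adj (g i) w ∧ G.Adj v w)).card
        ≤ ∑ _i ∈ univ.filter (fun i : Fin (ψ v + 1) => i ≠ Fin.last (ψ v)), (r-1) :=
          Finset.sum_le_sum hbound
      _ = (univ.filter (fun i : Fin (ψ v + 1) => i ≠ Fin.last (ψ v))).card * (r-1) := by
          rw [Finset.sum_const, smul_eq_mul]
      _ = ψ v * (r-1) := by
          rw [Finset.filter_ne', Finset.card_erase_of_mem (Finset.mem_univ _)]
          simp
      _ = (r-1) * ψ v := Nat.mul_comm _ _
  have hlevel : ∀ t : ℕ, ∃ σ : V → ℕ,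
      (∀ v ∈ univ.filter (fun v => ψ v = t), σ v ≤ (r-1)*t) ∧
      ∀ u ∈ univ.filter (fun v => ψ v = t), ∀ w ∈ univ.filter (fun v => ψ v = t),
        G.Adj u w → σ u ≠ σ w := by
    intro t
    refine greedy_coloring G c hc ((r-1)*t) _ _ rfl ?_
    intro v hv
    rw [Finset.mem_filter] at hv
    calc ((univ.filter (fun v => ψ v = t)).filter (fun w => G.Adj v w ∧ c v < c w)).card
        ≤ (univ.filter (fun w => G.Adj v w ∧ ψ w = ψ v ∧ c v < c w)).card := by
          apply Finset.card_le_card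
          intro w hw
          rw [Finset.mem_filter, Finset.mem_filter] at hw
          rw [Finset.mem_filter]
          exact ⟨Finset.mem_univ _, hw.2.1, hw.1.2.trans hv.2.symm, hw.2.2⟩
      _ ≤ (r-1) * ψ v := houtdeg v
      _ = (r-1) * t := by rw [hv.2]
  choose σf hσ1 hσ2 using hlevel
  set off : ℕ → ℕ := fun t => ∑ i ∈ Finset.range t, ((r-1)*i + 1) with hoffdef
  have hoffmono : Monotone off := by
    intro a b hab
    exact Finset.sum_le_sum_of_subset (Finset.range_subset_range.mpr hab)
  have hoffsucc : ∀ t, off (t+1) = off t + ((r-1)*t + 1) :=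
    fun t => Finset.sum_range_succ _ t
  set ν : V → ℕ := fun v => off (ψ v) + σf (ψ v) v with hνdef
  have hνeq : ∀ v, ν v = off (ψ v) + σf (ψ v) v := fun _ => rfl
  have hσle : ∀ v, σf (ψ v) v ≤ (r-1) * ψ v := by
    intro v
    exact hσ1 (ψ v) v (by simp)
  have hνlt : ∀ v, ν v < off (s-1) := by
    intro v
    have h2 : ν v < off (ψ v + 1) := by
      rw [hνeq, hoffsucc]
      have := hσle v
      omega
    exact lt_of_lt_of_le h2 (hoffmono (by have := hψle v; omega))
  have hkey : ∀ a b : V, ψ a < ψ b → ν a < ν b := by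
    intro a b hab
    have h2 : ν a < off (ψ a + 1) := by
      rw [hνeq, hoffsucc]
      have := hσle a
      omega
    have h3 : off (ψ a + 1) ≤ off (ψ b) := hoffmono hab
    have h4 : off (ψ b) ≤ ν b := by rw [hνeq]; omega
    omega
  have hνproper : ∀ u w : V, G.Adj u w → ν u ≠ ν w := by
    intro u w huw
    rcases lt_trichotomy (ψ u) (ψ w) with h | h | h
    · exact Nat.ne_of_lt (hkey u w h)
    · have hmem : u ∈ univ.filter (fun v => ψ v = ψ u) := by simp
      have hmem' : w ∈ univ.filter (fun v => ψ v = ψ u) := by simp [h]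
      have := hσ2 (ψ u) u hmem w hmem' huw
      rw [hνeq, hνeq, ← h]
      omega
    · exact (Nat.ne_of_lt (hkey w u h)).symm
  have hcol : G.Colorable (off (s-1)) := by
    exact ⟨SimpleGraph.Coloring.mk (fun v => ⟨ν v, hνlt v⟩)
      (fun {a b} hab => by simpa [Fin.ext_iff] using hνproper a b hab)⟩
  have hle := hcol.chromaticNumber_le
  have hk : (r - 1) * (s - 1) * s / 2 + s ≤ off (s-1) := by
    have h := le_trans hchi hle
    exact_mod_cast h
  -- arithmetic contradiction
  have hoffval : off (s-1) = (r-1) * (∑ i ∈ Finset.range (s-1), i) + (s-1) := by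
    show (∑ i ∈ Finset.range (s-1), ((r-1)*i + 1)) = _
    rw [Finset.sum_add_distrib, ← Finset.mul_sum, Finset.sum_const, Finset.card_range,
      smul_eq_mul, mul_one]
  have hT : (∑ i ∈ Finset.range (s-1), i) * 2 = (s-1) * (s-1-1) :=
    Finset.sum_range_id_mul_two (s-1)
  have h2 : (r-1) * (∑ i ∈ Finset.range (s-1), i) ≤ (r-1)*(s-1)*s / 2 := by
    rw [Nat.le_div_iff_mul_le (by norm_num : 0 < 2)]
    calc (r-1) * (∑ i ∈ Finset.range (s-1), i) * 2
        = (r-1) * ((s-1) * (s-1-1)) := by rw [mul_assoc, hT]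
      _ ≤ (r-1) * ((s-1) * s) := Nat.mul_le_mul_left _ (Nat.mul_le_mul_left _ (by omega))
      _ = (r-1)*(s-1)*s := (mul_assoc _ _ _).symm
  omega
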